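/- Let 𝒦 be a class of Hausdorff topological spaces closed under finite products and under passage to closed subspaces, let K be a topological group belonging to 𝒦, and let N be a normal (not necessarily closed) subgroup of K which is a 𝒦-analytic subset of K. Let H = K/N as an abstract group and π : K → H the quotient homomorphism. Let A, B ⊆ H be subsets such that π⁻¹(A) and π⁻¹(B) are 𝒦-analytic. Then the following subsets of K are 𝒦-analytic: (1) π⁻¹(AB); (2) π⁻¹({[a,b] : a ∈ A, b ∈ B}); (3) π⁻¹({h ∈ H : [h,y] ∈ A}) for every y ∈ H; (4) π⁻¹(Cen_H(X)) for every finite subset X ⊆ H, where Cen_H(X) is the centralizer of X in H. -/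

import Mathlib

open Pointwise
open scoped commutatorElement

universe u

/-- A subset is `𝒦`-analytic if it is the image of a continuous map from a member of `𝒦`. -/
def KAnalytic (𝒦 : (X : Type u) → TopologicalSpace X → Prop) {X : Type u}
    [tX : TopologicalSpace X] (A : Set X) : Prop :=
  ∃ (Z : Type u) (tZ : TopologicalSpace Z), 𝒦 Z tZ ∧
    ∃ ψ : Z → X, @Continuous Z X tZ tX ψ ∧ Set.range ψ = A

/-- A class of Hausdorff spaces closed under finite products and closed subspaces. -/
structure IsSpaceClass (𝒦 : (X : Type u) → TopologicalSpace X → Prop) : Prop where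
  t2 : ∀ (X : Type u) [tX : TopologicalSpace X], 𝒦 X tX → T2Space X
  prod : ∀ (X Y : Type u) [tX : TopologicalSpace X] [tY : TopologicalSpace Y],
    𝒦 X tX → 𝒦 Y tY → 𝒦 (X × Y) inferInstance
  closed : ∀ (X : Type u) [tX : TopologicalSpace X] (A : Set X),
    𝒦 X tX → IsClosed A → 𝒦 A inferInstance

section Helpers

variable {𝒦 : (X : Type u) → TopologicalSpace X → Prop}
variable {K : Type u} [tK : TopologicalSpace K]

lemma kAnalytic_image2 (h𝒦 : IsSpaceClass 𝒦) {S T : Set K}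
    (hS : KAnalytic 𝒦 S) (hT : KAnalytic 𝒦 T) (f : K × K → K) (hf : Continuous f) :
    KAnalytic 𝒦 (f '' (S ×ˢ T)) := by
  obtain ⟨Z₁, t₁, hZ₁, ψ₁, hc₁, hr₁⟩ := hS
  obtain ⟨Z₂, t₂, hZ₂, ψ₂, hc₂, hr₂⟩ := hT
  letI := t₁; letI := t₂
  refine ⟨Z₁ × Z₂, inferInstance, h𝒦.prod _ _ hZ₁ hZ₂,
    f ∘ Prod.map ψ₁ ψ₂, hf.comp (hc₁.prodMap hc₂), ?_⟩
  rw [Set.range_comp, Set.range_prodMap, hr₁, hr₂]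

lemma kAnalytic_preimage (h𝒦 : IsSpaceClass 𝒦) (hK : 𝒦 K tK) {S : Set K}
    (hS : KAnalytic 𝒦 S) (f : K → K) (hf : Continuous f) :
    KAnalytic 𝒦 (f ⁻¹' S) := by
  obtain ⟨Z₁, t₁, hZ₁, ψ₁, hc₁, hr₁⟩ := hS
  letI := t₁
  haveI : T2Space K := h𝒦.t2 K hK
  have hcl : IsClosed {p : K × Z₁ | f p.1 = ψ₁ p.2} :=
    isClosed_eq (hf.comp continuous_fst) (hc₁.comp continuous_snd)
  refine ⟨{p : K × Z₁ // f p.1 = ψ₁ p.2}, inferInstance,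
    h𝒦.closed _ _ (h𝒦.prod _ _ hK hZ₁) hcl,
    fun p => p.1.1, (continuous_fst.comp continuous_subtype_val), ?_⟩
  ext x
  simp only [Set.mem_range, Subtype.exists, Set.mem_preimage]
  constructor
  · rintro ⟨⟨a, z⟩, hp, rfl⟩
    exact hr₁ ▸ ⟨z, hp.symm⟩
  · intro hx
    rw [← hr₁] at hx
    obtain ⟨z, hz⟩ := hx
    exact ⟨(x, z), hz.symm, rfl⟩

lemma kAnalytic_inter (h𝒦 : IsSpaceClass 𝒦) (hK : 𝒦 K tK) {S T : Set K}
    (hS : KAnalytic 𝒦 S) (hT : KAnalytic 𝒦 T) : KAnalytic 𝒦 (S ∩ T) := by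
  obtain ⟨Z₁, t₁, hZ₁, ψ₁, hc₁, hr₁⟩ := hS
  obtain ⟨Z₂, t₂, hZ₂, ψ₂, hc₂, hr₂⟩ := hT
  letI := t₁; letI := t₂
  haveI : T2Space K := h𝒦.t2 K hK
  have hcl : IsClosed {p : Z₁ × Z₂ | ψ₁ p.1 = ψ₂ p.2} :=
    isClosed_eq (hc₁.comp continuous_fst) (hc₂.comp continuous_snd)
  refine ⟨{p : Z₁ × Z₂ // ψ₁ p.1 = ψ₂ p.2}, inferInstance,
    h𝒦.closed _ _ (h𝒦.prod _ _ hZ₁ hZ₂) hcl,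
    fun p => ψ₁ p.1.1, hc₁.comp (continuous_fst.comp continuous_subtype_val), ?_⟩
  ext x
  simp only [Set.mem_range, Subtype.exists, Set.mem_inter_iff, ← hr₁, ← hr₂]
  constructor
  · rintro ⟨⟨a, b⟩, hp, rfl⟩
    exact ⟨⟨a, rfl⟩, ⟨b, hp.symm⟩⟩
  · rintro ⟨⟨a, rfl⟩, ⟨b, hb⟩⟩
    exact ⟨(a, b), hb.symm, rfl⟩

lemma kAnalytic_univ (hK : 𝒦 K tK) : KAnalytic 𝒦 (Set.univ : Set K) :=
  ⟨K, tK, hK, id, continuous_id, Set.range_id⟩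

end Helpers

theorem preimages_kAnalytic {𝒦 : (X : Type u) → TopologicalSpace X → Prop}
    (h𝒦 : IsSpaceClass 𝒦) {K : Type u} [tK : TopologicalSpace K] [Group K]
    [IsTopologicalGroup K] (hK : 𝒦 K tK) (N : Subgroup K) [N.Normal]
    (hN : KAnalytic 𝒦 (N : Set K)) (A B : Set (K ⧸ N))
    (hA : KAnalytic 𝒦 (⇑(QuotientGroup.mk' N) ⁻¹' A))
    (hB : KAnalytic 𝒦 (⇑(QuotientGroup.mk' N) ⁻¹' B)) :
    KAnalytic 𝒦 (⇑(QuotientGroup.mk' N) ⁻¹' (A * B)) ∧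
    KAnalytic 𝒦 (⇑(QuotientGroup.mk' N) ⁻¹' {x | ∃ a ∈ A, ∃ b ∈ B, x = ⁅a, b⁆}) ∧
    (∀ y : K ⧸ N,
      KAnalytic 𝒦 (⇑(QuotientGroup.mk' N) ⁻¹' {h : K ⧸ N | ⁅h, y⁆ ∈ A})) ∧
    (∀ X : Set (K ⧸ N), X.Finite →
      KAnalytic 𝒦 (⇑(QuotientGroup.mk' N) ⁻¹' (Subgroup.centralizer X : Set (K ⧸ N)))) := by
  set π := QuotientGroup.mk' N with hπdef
  have hcomm : ∀ (x y : K), π ⁅x, y⁆ = ⁅π x, π y⁆ := fun x y => map_commutatorElement π x y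
  have hccont : ∀ y : K, Continuous (fun x : K => ⁅x, y⁆) := by
    intro y
    show Continuous (fun x : K => x * y * x⁻¹ * y⁻¹)
    fun_prop
  refine ⟨?_, ?_, ?_, ?_⟩
  · -- (1) product set
    have hid : ⇑π ⁻¹' (A * B) = (⇑π ⁻¹' A) * (⇑π ⁻¹' B) := by
      ext x
      simp only [Set.mem_preimage, Set.mem_mul]
      constructor
      · rintro ⟨a, ha, b, hb, hab⟩
        obtain ⟨xa, hxa⟩ := QuotientGroup.mk'_surjective N a
        refine ⟨xa, show π xa ∈ A from (show π xa = a from hxa) ▸ ha, xa⁻¹ * x, ?_, by group⟩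
        have : π (xa⁻¹ * x) = b := by
          rw [map_mul, map_inv, hxa, ← hab]; group
        simp [this, hb]
      · rintro ⟨a, ha, b, hb, rfl⟩
        exact ⟨π a, ha, π b, hb, (map_mul π a b).symm⟩
    rw [hid, ← Set.image_mul_prod]
    exact kAnalytic_image2 h𝒦 hA hB _ continuous_mul
  · -- (2) commutators
    have hC : KAnalytic 𝒦 ((fun p : K × K => ⁅p.1, p.2⁆) '' ((⇑π ⁻¹' A) ×ˢ (⇑π ⁻¹' B))) := by
      refine kAnalytic_image2 h𝒦 hA hB _ ?_
      show Continuous (fun p : K × K => p.1 * p.2 * p.1⁻¹ * p.2⁻¹)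
      fun_prop
    have hD := kAnalytic_image2 h𝒦 hC hN (fun p : K × K => p.1 * p.2) continuous_mul
    have hid : ⇑π ⁻¹' {x | ∃ a ∈ A, ∃ b ∈ B, x = ⁅a, b⁆} =
        (fun p : K × K => p.1 * p.2) ''
          (((fun p : K × K => ⁅p.1, p.2⁆) '' ((⇑π ⁻¹' A) ×ˢ (⇑π ⁻¹' B))) ×ˢ (N : Set K)) := by
      ext x
      simp only [Set.mem_preimage, Set.mem_setOf_eq, Set.mem_image, Set.mem_prod,
        Prod.exists]
      constructor
      · rintro ⟨a, ha, b, hb, hx⟩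
        obtain ⟨xa, hxa⟩ := QuotientGroup.mk'_surjective N a
        obtain ⟨xb, hxb⟩ := QuotientGroup.mk'_surjective N b
        have hn : ⁅xa, xb⁆⁻¹ * x ∈ N := by
          rw [← QuotientGroup.eq_one_iff]
          show π (⁅xa, xb⁆⁻¹ * x) = 1
          rw [map_mul, map_inv, hcomm, hxa, hxb, ← hx, hx]
          group
        exact ⟨⁅xa, xb⁆, ⁅xa, xb⁆⁻¹ * x,
          ⟨⟨xa, xb, ⟨show π xa ∈ A from (show π xa = a from hxa) ▸ ha,
            show π xb ∈ B from (show π xb = b from hxb) ▸ hb⟩, rfl⟩, hn⟩, by group⟩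
      · rintro ⟨c, n, ⟨⟨xa, xb, ⟨hxa, hxb⟩, rfl⟩, hn⟩, rfl⟩
        refine ⟨π xa, hxa, π xb, hxb, ?_⟩
        have h1 : π n = 1 := (QuotientGroup.eq_one_iff n).mpr hn
        rw [map_mul, hcomm, h1, mul_one]
    rw [hid]
    exact hD
  · -- (3)
    intro y
    have hid : ⇑π ⁻¹' {h : K ⧸ N | ⁅h, y⁆ ∈ A} =
        (fun x : K => ⁅x, Quotient.out y⁆) ⁻¹' (⇑π ⁻¹' A) := by
      ext x
      simp only [Set.mem_preimage, Set.mem_setOf_eq]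
      rw [hcomm]
      have : π (Quotient.out y) = y := QuotientGroup.out_eq' y
      rw [this]
    rw [hid]
    exact kAnalytic_preimage h𝒦 hK hA _ (hccont _)
  · -- (4)
    intro X hX
    refine Set.Finite.induction_on X hX ?_ ?_
    · -- empty
      have : Subgroup.centralizer (∅ : Set (K ⧸ N)) = ⊤ := by
        ext x; simp [Subgroup.mem_centralizer_iff]
      rw [this]
      simpa using kAnalytic_univ hK
    · intro y X hy hXfin ih
      have hins : Subgroup.centralizer (insert y X) =
          Subgroup.centralizer {y} ⊓ Subgroup.centralizer X := by
        ext x; simp [Subgroup.mem_centralizer_iff, or_imp, forall_and]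
      have hsingle : ⇑π ⁻¹' (Subgroup.centralizer {y} : Set (K ⧸ N)) =
          (fun x : K => ⁅x, Quotient.out y⁆) ⁻¹' (N : Set K) := by
        ext x
        simp only [Set.mem_preimage, SetLike.mem_coe,
          Subgroup.mem_centralizer_singleton_iff]
        rw [← QuotientGroup.eq_one_iff]
        show π x * y = y * π x ↔ π ⁅x, Quotient.out y⁆ = 1
        rw [hcomm]
        have hout : π (Quotient.out y) = y := QuotientGroup.out_eq' y
        rw [hout, commutatorElement_eq_one_iff_mul_comm]
      have h1 : KAnalytic 𝒦 (⇑π ⁻¹' (Subgroup.centralizer {y} : Set (K ⧸ N))) := by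
        rw [hsingle]
        exact kAnalytic_preimage h𝒦 hK hN _ (hccont _)
      have hid : ⇑π ⁻¹' (Subgroup.centralizer (insert y X) : Set (K ⧸ N)) =
          (⇑π ⁻¹' (Subgroup.centralizer {y} : Set (K ⧸ N))) ∩
          (⇑π ⁻¹' (Subgroup.centralizer X : Set (K ⧸ N))) := by
        rw [hins]
        rfl
      rw [hid]
      exact kAnalytic_inter h𝒦 hK h1 ih
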